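/- Let G be a simple graph and O an acyclic total orientation of G. Then indeg(O), the indegree sequence of O, is a parking function of G_• with respect to v_0, and moreover it is a maximal parking function: no parking function c of G_• satisfies c ≥ indeg(O) coordinatewise with c ≠ indeg(O). -/

import Mathlib

open Finset SimpleGraph
open scoped Classical

variable {V : Type*} [Fintype V] [DecidableEq V]

/-- `O` is a partial orientation of `G`: a set of steps along edges of `G`,
containing at most one direction per edge. -/
def IsPO (G : SimpleGraph V) (O : Finset (V × V)) : Prop :=
  ∀ p ∈ O, G.Adj p.1 p.2 ∧ (p.2, p.1) ∉ O

/-- A total orientation orients every edge. -/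
def IsTotalOn (G : SimpleGraph V) (O : Finset (V × V)) : Prop :=
  ∀ u v : V, G.Adj u v → (u, v) ∈ O ∨ (v, u) ∈ O

/-- `O` contains a directed cycle of steps. -/
def HasDirCycle (O : Finset (V × V)) : Prop :=
  ∃ (k : ℕ) (c : Fin (k + 1) → V), 1 ≤ k ∧ Function.Injective c ∧
    ∀ i : Fin (k + 1), (c i, c (i + 1)) ∈ O

/-- An acyclic partial orientation. -/
def IsAcyclicPO (G : SimpleGraph V) (O : Finset (V × V)) : Prop :=
  IsPO G O ∧ ¬ HasDirCycle O

/-- Indegree of vertex `v` in the orientation `O`. -/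
def indeg (O : Finset (V × V)) (v : V) : ℕ := (O.filter (fun p => p.2 = v)).card

/-- A potential cycle for `O`: a directed cycle of steps, each compatible with `O`
(i.e. whose reversal is not in `O`). -/
def IsPotCycle (G : SimpleGraph V) (O : Finset (V × V)) {k : ℕ} (c : Fin (k + 1) → V) : Prop :=
  1 ≤ k ∧ Function.Injective c ∧
    ∀ i : Fin (k + 1), G.Adj (c i) (c (i + 1)) ∧ (c (i + 1), c i) ∉ O

/-- Score of a step compatible with `O`, with respect to the parameter list `a`. -/
def stepScore (a : V → V → ℝ) (O : Finset (V × V)) (p : V × V) : ℝ :=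
  if p ∈ O then -(a p.2 p.1) else a p.1 p.2

/-- Score of a potential cycle. -/
def cycScore (a : V → V → ℝ) (O : Finset (V × V)) {k : ℕ} (c : Fin (k + 1) → V) : ℝ :=
  ∑ i : Fin (k + 1), stepScore a O (c i, c (i + 1))

/-- `O` is `a`-admissible: every potential cycle has strictly positive score. -/
def IsAdmissible (G : SimpleGraph V) (a : V → V → ℝ) (O : Finset (V × V)) : Prop :=
  ∀ (k : ℕ) (c : Fin (k + 1) → V), IsPotCycle G O c → 0 < cycScore a O c

/-- `O` is almost-`a`-admissible: not admissible, but no potential cycle has negative score. -/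
def IsAlmostAdmissible (G : SimpleGraph V) (a : V → V → ℝ) (O : Finset (V × V)) : Prop :=
  ¬ IsAdmissible G a O ∧
    ∀ (k : ℕ) (c : Fin (k + 1) → V), IsPotCycle G O c → 0 ≤ cycScore a O c

/-- The parameter list condition: the central region of `Σ_G(A)` is nonempty. -/
def HasCentral (G : SimpleGraph V) (a : V → V → ℝ) : Prop :=
  ∃ x : V → ℝ, ∀ u v : V, G.Adj u v → x u - x v < a u v

/-- Number of edges of `G_•` from `i` to vertices outside `W` (including the edge to the sink). -/
noncomputable def dW (G : SimpleGraph V) (W : Finset V) (i : V) : ℕ :=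
  1 + (Finset.univ.filter (fun u => u ∉ W ∧ G.Adj i u)).card

/-- `c` is a parking function of `G_•` with respect to the added sink `v₀`. -/
def IsPF (G : SimpleGraph V) (c : V → ℤ) : Prop :=
  ∀ W : Finset V, W.Nonempty → ∃ i ∈ W, 0 ≤ c i ∧ c i < dW G W i

omit [Fintype V] [DecidableEq V] in
lemma iter_mem' {f : V → V} {W : Finset V} (hf : ∀ y ∈ W, f y ∈ W) {x : V}
    (hx : x ∈ W) : ∀ n, f^[n] x ∈ W := by
  intro n
  induction n with
  | zero => simpa using hx
  | succ n ih => rw [Function.iterate_succ_apply']; exact hf _ ih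

lemma exists_source' (G : SimpleGraph V) (O : Finset (V × V)) (hPO : IsPO G O)
    (hacyc : ¬ HasDirCycle O) {W : Finset V} (hW : W.Nonempty) :
    ∃ i ∈ W, ∀ u ∈ W, (u, i) ∉ O := by
  by_contra hcon
  push_neg at hcon
  have hf : ∀ i : V, ∃ u : V, i ∈ W → u ∈ W ∧ (u, i) ∈ O := by
    intro i
    by_cases hi : i ∈ W
    · obtain ⟨u, hu1, hu2⟩ := hcon i hi
      exact ⟨u, fun _ => ⟨hu1, hu2⟩⟩
    · exact ⟨i, fun h' => absurd h' hi⟩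
  choose f hfspec using hf
  obtain ⟨w, hw⟩ := hW
  have hfW : ∀ y ∈ W, f y ∈ W := fun y hy => (hfspec y hy).1
  have hmem : ∀ n, f^[n] w ∈ W := iter_mem' hfW hw
  obtain ⟨a, b, hab, heq⟩ := Fintype.exists_ne_map_eq_of_card_lt
    (fun n : Fin (Fintype.card V + 1) => f^[(n : ℕ)] w) (by simp)
  have hxex : ∃ x, x ∈ W ∧ ∃ ℓ, 0 < ℓ ∧ f^[ℓ] x = x := by
    have key : ∀ p q : ℕ, p < q → f^[p] w = f^[q] w →
        ∃ x, x ∈ W ∧ ∃ ℓ, 0 < ℓ ∧ f^[ℓ] x = x := by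
      intro p q hpq hpqeq
      refine ⟨f^[p] w, hmem p, q - p, by omega, ?_⟩
      rw [← Function.iterate_add_apply, Nat.sub_add_cancel hpq.le, ← hpqeq]
    rcases lt_trichotomy (a : ℕ) (b : ℕ) with h | h | h
    · exact key _ _ h heq
    · exact absurd (Fin.ext h) hab
    · exact key _ _ h heq.symm
  obtain ⟨x, hxW, hper⟩ := hxex
  set L := Nat.find hper with hLdef
  have hL0 : 0 < L := (Nat.find_spec hper).1
  have hLfix : f^[L] x = x := (Nat.find_spec hper).2
  have hLmin : ∀ m, 0 < m → f^[m] x = x → L ≤ m := fun m hm hfix =>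
    hLdef ▸ Nat.find_le ⟨hm, hfix⟩
  clear_value L
  have hmemx : ∀ n, f^[n] x ∈ W := iter_mem' hfW hxW
  have hL2 : 2 ≤ L := by
    by_contra h
    have hL1 : L = 1 := by omega
    rw [hL1] at hLfix
    have hxx : f x = x := by simpa using hLfix
    have h1 := (hfspec x hxW).2
    rw [hxx] at h1
    exact G.irrefl (hPO _ h1).1
  have hinj : ∀ s t : ℕ, s < t → t < L → f^[s] x ≠ f^[t] x := by
    intro s t hst htL hne
    have h2 := congrArg (f^[L - t]) hne
    rw [← Function.iterate_add_apply, ← Function.iterate_add_apply] at h2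
    have h3 : L - t + t = L := by omega
    rw [h3, hLfix] at h2
    have := hLmin (L - t + s) (by omega) h2
    omega
  set k := L - 1 with hk
  refine hacyc ⟨k, fun i => f^[L - 1 - (i : ℕ)] x, by omega, ?_, ?_⟩
  · intro i j hij
    have hi := i.isLt; have hj := j.isLt
    by_contra hne
    have hvalne : (i : ℕ) ≠ (j : ℕ) := fun h => hne (Fin.ext h)
    simp only at hij
    rcases lt_or_gt_of_ne hvalne with h | h
    · exact hinj (L - 1 - (j : ℕ)) (L - 1 - (i : ℕ)) (by omega) (by omega) hij.symm
    · exact hinj (L - 1 - (i : ℕ)) (L - 1 - (j : ℕ)) (by omega) (by omega) hij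
  · intro i
    have hi := i.isLt
    show (f^[L - 1 - (i : ℕ)] x, f^[L - 1 - ((i + 1 : Fin (k + 1)) : ℕ)] x) ∈ O
    rcases eq_or_ne i (Fin.last k) with hlast | hlast
    · have h0 : ((i + 1 : Fin (k + 1)) : ℕ) = 0 := by
        rw [Fin.val_add_one, if_pos hlast]
      have h1 : (i : ℕ) = k := by rw [hlast]; rfl
      rw [h0, h1]
      have h3 : f (f^[L - 1 - 0] x) = x := by
        rw [← Function.iterate_succ_apply' f (L - 1 - 0) x]
        have he : (L - 1 - 0).succ = L := by omega
        rw [he, hLfix]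
      have h4 : f^[L - 1 - k] x = x := by
        have he : L - 1 - k = 0 := by omega
        rw [he]; rfl
      have hO := (hfspec (f^[L - 1 - 0] x) (hmemx _)).2
      rw [h3] at hO
      rw [h4]
      exact hO
    · have hik : (i : ℕ) ≠ k := fun h => hlast (Fin.ext (by simpa using h))
      have h0 : ((i + 1 : Fin (k + 1)) : ℕ) = (i : ℕ) + 1 := by
        rw [Fin.val_add_one, if_neg hlast]
      rw [h0]
      have h3 : f (f^[L - 1 - ((i : ℕ) + 1)] x) = f^[L - 1 - (i : ℕ)] x := by
        rw [← Function.iterate_succ_apply' f (L - 1 - ((i : ℕ) + 1)) x]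
        congr 1
        omega
      have hO := (hfspec (f^[L - 1 - ((i : ℕ) + 1)] x) (hmemx _)).2
      rw [h3] at hO
      exact hO

lemma indeg_lt_dW' (G : SimpleGraph V) (O : Finset (V × V)) (hPO : IsPO G O)
    {W : Finset V} {i : V} (hsrc : ∀ u ∈ W, (u, i) ∉ O) :
    indeg O i < dW G W i := by
  have hle : (O.filter (fun p => p.2 = i)).card ≤
      (Finset.univ.filter (fun u => u ∉ W ∧ G.Adj i u)).card := by
    apply Finset.card_le_card_of_injOn (fun p => p.1)
    · rintro ⟨u, v⟩ hp
      rw [mem_coe, mem_filter] at hp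
      obtain ⟨hpO, hpi⟩ := hp
      simp only at hpi
      subst hpi
      have hadj := (hPO _ hpO).1
      simp only [mem_coe, mem_filter, mem_univ, true_and]
      exact ⟨fun h => hsrc u h hpO, hadj.symm⟩
    · rintro ⟨u, v⟩ hp ⟨u', v'⟩ hp' huv
      simp only [mem_coe, mem_filter] at hp hp'
      simp only at huv
      ext
      · exact huv
      · rw [hp.2, hp'.2]
  have : indeg O i ≤ (Finset.univ.filter (fun u => u ∉ W ∧ G.Adj i u)).card := hle
  unfold dW
  omega

/-- The indegree sequence of an acyclic total orientation of `G` is a maximal parking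
function of `G_•` with respect to the sink. -/
theorem indeg_total_acyclic_maximal_parking (G : SimpleGraph V) (O : Finset (V × V))
    (hPO : IsPO G O) (htot : IsTotalOn G O) (hacyc : ¬ HasDirCycle O) :
    IsPF G (fun v => (indeg O v : ℤ)) ∧
      ∀ c : V → ℤ, IsPF G c → (∀ v : V, (indeg O v : ℤ) ≤ c v) →
        c = fun v => (indeg O v : ℤ) := by
  constructor
  · intro W hWne
    obtain ⟨i, hiW, hsrc⟩ := exists_source' G O hPO hacyc hWne
    exact ⟨i, hiW, Int.natCast_nonneg _, by simpa using (Int.ofNat_lt.mpr (indeg_lt_dW' G O hPO hsrc))⟩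
  · intro c hc hle
    funext v
    by_contra hne
    have hv : (indeg O v : ℤ) < c v := lt_of_le_of_ne (hle v) (Ne.symm hne)
    set R : V → V → Prop := Relation.ReflTransGen (fun a b => (a, b) ∈ O) with hR
    set W : Finset V := Finset.univ.filter (fun i => R v i) with hWdef
    have hvW : v ∈ W := by
      rw [hWdef, mem_filter]
      exact ⟨mem_univ _, Relation.ReflTransGen.refl⟩
    obtain ⟨i, hiW, hc0, hcd⟩ := hc W ⟨v, hvW⟩
    have hRvi : R v i := (mem_filter.mp hiW).2
    have hNincard : ((O.filter (fun p => p.2 = i)).image Prod.fst).card ≤ indeg O i :=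
      Finset.card_image_le
    have hSN : (Finset.univ.filter (fun u => u ∉ W ∧ G.Adj i u)) ⊆
        (O.filter (fun p => p.2 = i)).image Prod.fst := by
      intro u hu
      rw [mem_filter] at hu
      obtain ⟨-, huW, hadj⟩ := hu
      rcases htot i u hadj with h | h
      · exact absurd (by rw [hWdef, mem_filter]; exact ⟨mem_univ _, hRvi.tail h⟩) huW
      · exact mem_image.mpr ⟨(u, i), mem_filter.mpr ⟨h, rfl⟩, rfl⟩
    have hdWeq : dW G W i = 1 + (Finset.univ.filter (fun u => u ∉ W ∧ G.Adj i u)).card := rfl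
    rcases eq_or_ne i v with rfl | hiv
    · have h1 : (Finset.univ.filter (fun u => u ∉ W ∧ G.Adj i u)).card ≤ indeg O i :=
        (Finset.card_le_card hSN).trans hNincard
      rw [hdWeq] at hcd
      push_cast at hcd
      omega
    · obtain ⟨b, hRb, hbO⟩ : ∃ b, R v b ∧ (b, i) ∈ O := by
        rcases Relation.ReflTransGen.cases_tail hRvi with h | ⟨b, hb1, hb2⟩
        · exact absurd h hiv
        · exact ⟨b, hb1, hb2⟩
      have hbW : b ∈ W := by rw [hWdef, mem_filter]; exact ⟨mem_univ _, hRb⟩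
      have hbNin : b ∈ (O.filter (fun p => p.2 = i)).image Prod.fst :=
        mem_image.mpr ⟨(b, i), mem_filter.mpr ⟨hbO, rfl⟩, rfl⟩
      have hbS : b ∉ Finset.univ.filter (fun u => u ∉ W ∧ G.Adj i u) := by
        rw [mem_filter]
        rintro ⟨-, hbW', -⟩
        exact hbW' hbW
      have hins : insert b (Finset.univ.filter (fun u => u ∉ W ∧ G.Adj i u)) ⊆
          (O.filter (fun p => p.2 = i)).image Prod.fst :=
        Finset.insert_subset hbNin hSN
      have h1 : (Finset.univ.filter (fun u => u ∉ W ∧ G.Adj i u)).card + 1 ≤ indeg O i := by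
        have hcard := Finset.card_le_card hins
        rw [Finset.card_insert_of_notMem hbS] at hcard
        omega
      have h2 := hle i
      rw [hdWeq] at hcd
      push_cast at hcd
      omega
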